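/- Let n ≥ 2 and 1 < p ≤ 2, and set p' = p/(p−1). Let σ̃ be a nonnegative Borel measure on ℝ^n satisfying the discrete Carleson condition: there is A > 0 such that Σ_{Q ⊂ P, Q ∈ 𝒬} c_Q · σ̃(Q ∩ E)^{p'} ≤ A · σ̃(P ∩ E) for every dyadic cube P ∈ 𝒬 and every compact set E ⊂ ℝ^n. Then there exists a constant C = C(n,p,A) > 0 such that for every nonnegative sequence {λ_Q}_{Q∈𝒬} indexed by dyadic cubes and every dyadic cube P ∈ 𝒬: ∫_P { Σ_{Q ∈ 𝒬, x ∈ Q ⊂ P} c_Q · λ_Q^{1/(p−1)} }^{p−1} dσ̃(x) ≥ C · Σ_{Q ⊂ P} c_Q · σ̃(Q)^{1/(p−1)} · λ_Q. -/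

import Mathlib

open MeasureTheory Metric Set ENNReal

noncomputable section

/-- A dyadic cube `∏ᵢ [2^k mᵢ, 2^k (mᵢ+1))` in `ℝⁿ`, recorded by its scale `k` and corner `m`. -/
structure DyadicCube (n : ℕ) where
  k : ℤ
  m : Fin n → ℤ

/-- The carrier set of a dyadic cube. -/
def DyadicCube.set {n : ℕ} (Q : DyadicCube n) : Set (EuclideanSpace ℝ (Fin n)) :=
  {x | ∀ i : Fin n, (2 : ℝ) ^ Q.k * (Q.m i : ℝ) ≤ x i ∧ x i < (2 : ℝ) ^ Q.k * ((Q.m i : ℝ) + 1)}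

/-- The side length `ℓ(Q) = 2^k` of a dyadic cube. -/
def DyadicCube.len {n : ℕ} (Q : DyadicCube n) : ℝ := (2 : ℝ) ^ Q.k

/-- The coefficient `c_Q = ℓ(Q)^{(p−n)/(p−1)}`. -/
def cQ {n : ℕ} (p : ℝ) (Q : DyadicCube n) : ℝ := Q.len ^ ((p - (n : ℝ)) / (p - 1))

/-- The discrete Carleson condition, localized to compact sets:
`Σ_{Q ⊆ P} c_Q σ(Q ∩ E)^{p'} ≤ A · σ(P ∩ E)` for all dyadic `P` and compact `E`. -/
def DiscCarlE {n : ℕ} (p : ℝ) (σ : Measure (EuclideanSpace ℝ (Fin n))) (A : ℝ) : Prop :=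
  ∀ (P : DyadicCube n) (E : Set (EuclideanSpace ℝ (Fin n))), IsCompact E →
    (∑' Q : {Q : DyadicCube n // Q.set ⊆ P.set},
        ENNReal.ofReal (cQ p Q.1) * σ (Q.1.set ∩ E) ^ (p / (p - 1)))
      ≤ ENNReal.ofReal A * σ (P.set ∩ E)


namespace Stmt8

variable {n : ℕ}

variable {n : ℕ}

lemma two_zpow_pos (k : ℤ) : (0:ℝ) < 2 ^ k := zpow_pos (by norm_num) k

def anc (x : EuclideanSpace ℝ (Fin n)) (k : ℤ) : DyadicCube n :=
  ⟨k, fun i => ⌊x i / 2 ^ k⌋⟩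

@[simp] lemma anc_k (x : EuclideanSpace ℝ (Fin n)) (k : ℤ) : (anc x k).k = k := rfl

lemma mem_anc (x : EuclideanSpace ℝ (Fin n)) (k : ℤ) : x ∈ (anc x k).set := by
  intro i
  have h := two_zpow_pos k
  constructor
  · show (2:ℝ) ^ k * ((⌊x i / 2 ^ k⌋ : ℤ) : ℝ) ≤ x i
    rw [mul_comm, ← le_div_iff₀ h]
    exact Int.floor_le _
  · show x i < (2:ℝ) ^ k * (((⌊x i / 2 ^ k⌋ : ℤ) : ℝ) + 1)
    rw [mul_comm, ← div_lt_iff₀ h]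
    exact Int.lt_floor_add_one _

lemma eq_anc_of_mem {Q : DyadicCube n} {x : EuclideanSpace ℝ (Fin n)}
    (hx : x ∈ Q.set) : Q = anc x Q.k := by
  obtain ⟨k, m⟩ := Q
  show _ = DyadicCube.mk k _
  congr 1
  funext i
  have h := two_zpow_pos k
  have h1 := (hx i).1
  have h2 := (hx i).2
  refine (Int.floor_eq_iff.mpr ⟨?_, ?_⟩).symm
  · rw [le_div_iff₀ h]; nlinarith
  · rw [div_lt_iff₀ h]; nlinarith

lemma eq_of_mem_of_mem {Q R : DyadicCube n} {x : EuclideanSpace ℝ (Fin n)}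
    (hk : Q.k = R.k) (hxQ : x ∈ Q.set) (hxR : x ∈ R.set) : Q = R := by
  rw [eq_anc_of_mem hxQ, eq_anc_of_mem hxR, hk]

lemma interval_subset_interval {k K : ℤ} (hkK : k ≤ K) {m M : ℤ} {t : ℝ}
    (h1 : (2:ℝ) ^ k * m ≤ t) (h2 : t < 2 ^ k * ((m:ℝ) + 1))
    (H1 : (2:ℝ) ^ K * M ≤ t) (H2 : t < 2 ^ K * ((M:ℝ) + 1)) :
    (2:ℝ) ^ K * M ≤ 2 ^ k * m ∧ (2:ℝ) ^ k * ((m:ℝ) + 1) ≤ 2 ^ K * ((M:ℝ) + 1) := by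
  set N : ℤ := 2 ^ (K - k).toNat with hN
  have hNr : (2:ℝ) ^ K = 2 ^ k * (N:ℝ) := by
    rw [hN]
    push_cast
    rw [← zpow_natCast (2:ℝ), Int.toNat_of_nonneg (by omega : (0:ℤ) ≤ K - k),
      ← zpow_add₀ (by norm_num : (2:ℝ) ≠ 0)]
    congr 1
    omega
  have h := two_zpow_pos k
  have key1 : N * M ≤ m := by
    have hlt : (2:ℝ) ^ k * ((N * M : ℤ) : ℝ) < 2 ^ k * ((m:ℝ) + 1) := by
      push_cast
      calc (2:ℝ)^k * ((N:ℝ) * M) = 2 ^ K * M := by rw [hNr]; ring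
        _ ≤ t := H1
        _ < _ := h2
    have := (mul_lt_mul_iff_right₀ h).mp hlt
    exact_mod_cast Int.lt_add_one_iff.mp (by exact_mod_cast this)
  have key2 : m + 1 ≤ N * (M + 1) := by
    have hlt : (2:ℝ) ^ k * ((m:ℝ)) < 2 ^ k * ((N * (M+1) : ℤ) : ℝ) := by
      push_cast
      calc (2:ℝ)^k * (m:ℝ) ≤ t := h1
        _ < 2 ^ K * ((M:ℝ) + 1) := H2
        _ = 2 ^ k * ((N:ℝ) * ((M:ℝ)+1)) := by rw [hNr]; ring
    have := (mul_lt_mul_iff_right₀ h).mp hlt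
    have : (m:ℝ) < ((N * (M+1) : ℤ) : ℝ) := this
    exact Int.lt_iff_add_one_le.mp (by exact_mod_cast this)
  constructor
  · rw [hNr]
    calc (2:ℝ)^k * (N:ℝ) * M = 2^k * ((N * M : ℤ) : ℝ) := by push_cast; ring
      _ ≤ 2^k * m := by
          apply mul_le_mul_of_nonneg_left _ h.le
          exact_mod_cast key1
  · calc (2:ℝ)^k * ((m:ℝ)+1) = 2^k * (((m + 1 : ℤ)) : ℝ) := by push_cast; ring
      _ ≤ 2^k * ((N * (M+1) : ℤ) : ℝ) := by
          apply mul_le_mul_of_nonneg_left _ h.le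
          exact_mod_cast key2
      _ = 2 ^ K * ((M:ℝ)+1) := by rw [hNr]; push_cast; ring

lemma set_subset_set {Q R : DyadicCube n} {x : EuclideanSpace ℝ (Fin n)} (hk : Q.k ≤ R.k)
    (hxQ : x ∈ Q.set) (hxR : x ∈ R.set) : Q.set ⊆ R.set := by
  intro y hy i
  obtain ⟨hl, hr⟩ := interval_subset_interval hk (hxQ i).1 (hxQ i).2 (hxR i).1 (hxR i).2
  exact ⟨le_trans hl (hy i).1, lt_of_lt_of_le (hy i).2 hr⟩

def corner (Q : DyadicCube n) : EuclideanSpace ℝ (Fin n) := WithLp.toLp 2 (fun i => (2:ℝ) ^ Q.k * Q.m i)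

lemma corner_mem (Q : DyadicCube n) : corner Q ∈ Q.set := by
  intro i
  refine ⟨le_refl _, ?_⟩
  have h := two_zpow_pos Q.k
  show (2:ℝ) ^ Q.k * Q.m i < _
  nlinarith

lemma k_le_of_subset (hn : 0 < n) {Q R : DyadicCube n} (h : Q.set ⊆ R.set) : Q.k ≤ R.k := by
  by_contra hlt
  push_neg at hlt
  set i0 : Fin n := ⟨0, hn⟩
  have hc : corner Q ∈ R.set := h (corner_mem Q)
  -- corner Q i0 = 2^{R.k} * c with c = 2^{Q.k-R.k} * Q.m i0
  set c : ℤ := 2 ^ (Q.k - R.k).toNat * Q.m i0 with hcdef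
  have hcr : corner Q i0 = (2:ℝ) ^ R.k * (c:ℝ) := by
    show (2:ℝ) ^ Q.k * (Q.m i0 : ℝ) = _
    rw [hcdef]
    push_cast
    rw [← zpow_natCast (2:ℝ), Int.toNat_of_nonneg (by omega : (0:ℤ) ≤ Q.k - R.k),
      ← mul_assoc, ← zpow_add₀ (by norm_num : (2:ℝ) ≠ 0)]
    congr 2
    omega
  have hR := two_zpow_pos R.k
  have hc1 : (R.m i0 : ℝ) ≤ c := by
    have := (hc i0).1
    rw [hcr] at this
    exact le_of_mul_le_mul_left this hR
  have hc2 : (c:ℝ) < (R.m i0 : ℝ) + 1 := by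
    have := (hc i0).2
    rw [hcr] at this
    exact lt_of_mul_lt_mul_left this hR.le
  have hceq : c = R.m i0 := by
    have h1 : R.m i0 ≤ c := by exact_mod_cast hc1
    have h2 : c < R.m i0 + 1 := by exact_mod_cast hc2
    omega
  -- the shifted point
  set z : EuclideanSpace ℝ (Fin n) :=
    WithLp.toLp 2 (fun i => if i = i0 then corner Q i0 + 2 ^ R.k else corner Q i) with hzdef
  have hzi0 : z i0 = corner Q i0 + 2 ^ R.k := by simp [hzdef]
  have hzother : ∀ i, i ≠ i0 → z i = corner Q i := by
    intro i hi; simp [hzdef, hi]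
  have hzQ : z ∈ Q.set := by
    intro i
    by_cases hi : i = i0
    · rw [hi, hzi0]
      constructor
      · have := (corner_mem Q i0).1
        have h0 : corner Q i0 ≤ corner Q i0 + 2 ^ R.k := by linarith
        exact le_trans this h0
      · have h1 : (2:ℝ) ^ R.k < 2 ^ Q.k := by
          apply zpow_lt_zpow_right₀ (by norm_num : (1:ℝ) < 2) hlt
        have h2 : corner Q i0 = (2:ℝ)^Q.k * Q.m i0 := rfl
        show corner Q i0 + 2 ^ R.k < (2:ℝ) ^ Q.k * ((Q.m i0 : ℝ) + 1)
        rw [h2]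
        nlinarith
    · rw [hzother i hi]
      exact corner_mem Q i
  have hzR := h hzQ i0
  have : z i0 < (2:ℝ) ^ R.k * ((R.m i0 : ℝ) + 1) := hzR.2
  rw [hzi0, hcr, hceq] at this
  nlinarith


-- derived geometry
lemma anc_set_subset_of_mem {x : EuclideanSpace ℝ (Fin n)} {P : DyadicCube n}
    (hxP : x ∈ P.set) {k : ℤ} (hk : k ≤ P.k) : (anc x k).set ⊆ P.set :=
  set_subset_set (by simpa using hk) (mem_anc x k) hxP

lemma anc_self {x : EuclideanSpace ℝ (Fin n)} {P : DyadicCube n} (hxP : x ∈ P.set) :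
    anc x P.k = P := (eq_anc_of_mem hxP).symm

lemma anc_corner_eq {x : EuclideanSpace ℝ (Fin n)} {R : DyadicCube n} (hx : x ∈ R.set)
    {k : ℤ} (hk : R.k ≤ k) : anc (corner R) k = anc x k := by
  apply eq_of_mem_of_mem (by simp) (mem_anc _ k)
  exact set_subset_set (by simpa using hk) hx (mem_anc x k) (corner_mem R)

lemma subset_anc_corner {Q : DyadicCube n} {k : ℤ} (hk : Q.k ≤ k) :
    Q.set ⊆ (anc (corner Q) k).set :=
  set_subset_set (by simpa using hk) (corner_mem Q) (mem_anc _ k)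

lemma eq_anc_corner_of_subset {Q R : DyadicCube n} (h : Q.set ⊆ R.set) :
    R = anc (corner Q) R.k := eq_anc_of_mem (h (corner_mem Q))

instance : Countable (DyadicCube n) := by
  have hinj : Function.Injective (fun Q : DyadicCube n => (Q.k, Q.m)) := by
    intro a b h
    cases a; cases b
    simpa [DyadicCube.mk.injEq] using h
  exact hinj.countable

/-- The chain of dyadic cubes containing `x` inside `P`, indexed by depth. -/
def chainEquiv (hn : 0 < n) (P : DyadicCube n) (x : EuclideanSpace ℝ (Fin n))
    (hxP : x ∈ P.set) : ℕ ≃ {Q : DyadicCube n // x ∈ Q.set ∧ Q.set ⊆ P.set} where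
  toFun j := ⟨anc x (P.k - (j:ℤ)), mem_anc _ _, anc_set_subset_of_mem hxP (by omega)⟩
  invFun Q := (P.k - Q.1.k).toNat
  left_inv j := by simp
  right_inv Q := by
    have hk : Q.1.k ≤ P.k := k_le_of_subset hn Q.2.2
    apply Subtype.ext
    show anc x (P.k - ((P.k - Q.1.k).toNat : ℤ)) = Q.1
    have h1 : P.k - ((P.k - Q.1.k).toNat : ℤ) = Q.1.k := by omega
    rw [h1]
    exact (eq_anc_of_mem Q.2.1).symm

/-- The chain of dyadic cubes between `Q` and `P`. -/
def upEquiv (hn : 0 < n) {Q P : DyadicCube n} (hQP : Q.set ⊆ P.set) :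
    Fin ((P.k - Q.k).toNat + 1) ≃ {R : DyadicCube n // Q.set ⊆ R.set ∧ R.set ⊆ P.set} where
  toFun j :=
    ⟨anc (corner Q) (P.k - (j:ℕ)),
      subset_anc_corner (by have := j.2; have := k_le_of_subset hn hQP; omega),
      anc_set_subset_of_mem (hQP (corner_mem Q)) (by omega)⟩
  invFun R := ⟨(P.k - R.1.k).toNat, by
    have h1 : Q.k ≤ R.1.k := k_le_of_subset hn R.2.1
    have h2 : R.1.k ≤ P.k := k_le_of_subset hn R.2.2
    omega⟩
  left_inv j := by
    have h2 := j.2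
    have h3 := k_le_of_subset hn hQP
    apply Fin.ext
    show ((P.k - ((anc (corner Q) (P.k - ((j:ℕ):ℤ))).k)).toNat) = (j : ℕ)
    rw [anc_k]
    omega
  right_inv R := by
    have h1 : Q.k ≤ R.1.k := k_le_of_subset hn R.2.1
    have h2 : R.1.k ≤ P.k := k_le_of_subset hn R.2.2
    apply Subtype.ext
    show anc (corner Q) (P.k - (((P.k - R.1.k).toNat : ℕ) : ℤ)) = R.1
    have h3 : P.k - (((P.k - R.1.k).toNat : ℕ) : ℤ) = R.1.k := by omega
    rw [h3]
    exact (eq_anc_corner_of_subset R.2.1).symm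

lemma tsum_up (hn : 0 < n) {Q P : DyadicCube n} (hQP : Q.set ⊆ P.set)
    (F : DyadicCube n → ℝ≥0∞) :
    ∑' R : {R : DyadicCube n // Q.set ⊆ R.set ∧ R.set ⊆ P.set}, F R.1
      = ∑ j ∈ Finset.range ((P.k - Q.k).toNat + 1), F (anc (corner Q) (P.k - (j:ℕ))) := by
  rw [← (upEquiv hn hQP).tsum_eq, tsum_fintype]
  exact Fin.sum_univ_eq_sum_range (fun j => F (anc (corner Q) (P.k - (j:ℕ)))) _

lemma tsum_chain (hn : 0 < n) (P : DyadicCube n) (x : EuclideanSpace ℝ (Fin n))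
    (hxP : x ∈ P.set) (F : DyadicCube n → ℝ≥0∞) :
    ∑' Q : {Q : DyadicCube n // x ∈ Q.set ∧ Q.set ⊆ P.set}, F Q.1
      = ∑' j : ℕ, F (anc x (P.k - (j:ℤ))) :=
  ((chainEquiv hn P x hxP).tsum_eq (fun Q => F Q.1)).symm

lemma measurableSet_set (Q : DyadicCube n) : MeasurableSet Q.set := by
  have : Q.set = ⋂ i : Fin n,
      (fun x : EuclideanSpace ℝ (Fin n) => x i) ⁻¹'
        (Ico ((2:ℝ)^Q.k * Q.m i) ((2:ℝ)^Q.k * ((Q.m i : ℝ) + 1))) := by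
    ext x
    simp [DyadicCube.set, mem_Ico]
  rw [this]
  exact MeasurableSet.iInter fun i =>
    (EuclideanSpace.proj (𝕜 := ℝ) i).measurable measurableSet_Ico

/-- compact exhaustion of a dyadic cube -/
def cpt (Q : DyadicCube n) (j : ℕ) : Set (EuclideanSpace ℝ (Fin n)) :=
  {x | ∀ i, (2:ℝ)^Q.k * Q.m i ≤ x i ∧ x i ≤ 2^Q.k * ((Q.m i : ℝ) + 1) - 2^Q.k/(j+1)}

lemma isCompact_cpt (Q : DyadicCube n) (j : ℕ) : IsCompact (cpt Q j) := by
  have h : cpt Q j = (EuclideanSpace.equiv (Fin n) ℝ) ⁻¹'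
      (Set.univ.pi fun i => Icc ((2:ℝ)^Q.k * Q.m i) (2^Q.k * ((Q.m i : ℝ) + 1) - 2^Q.k/(j+1))) := by
    ext x
    simp only [cpt, mem_setOf_eq, Set.mem_preimage, Set.mem_univ_pi, mem_Icc]
    constructor
    · intro h i
      have := h i
      simpa using this
    · intro h i
      have := h i
      simpa using this
  rw [h]
  exact (Homeomorph.isCompact_preimage (EuclideanSpace.equiv (Fin n) ℝ).toHomeomorph).mpr
    (isCompact_univ_pi fun i => isCompact_Icc)

lemma cpt_subset (Q : DyadicCube n) (j : ℕ) : cpt Q j ⊆ Q.set := by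
  intro x hx i
  have h1 := (hx i).1
  have h2 := (hx i).2
  have h3 : (0:ℝ) < 2^Q.k/(j+1) := by
    apply div_pos (two_zpow_pos _)
    positivity
  exact ⟨h1, by linarith⟩

lemma monotone_cpt (Q : DyadicCube n) : Monotone (cpt Q) := by
  intro a b hab x hx i
  have h1 := (hx i).1
  have h2 := (hx i).2
  refine ⟨h1, le_trans h2 ?_⟩
  have hab' : (a:ℝ) ≤ b := Nat.cast_le.mpr hab
  have : (2:ℝ)^Q.k/(b+1) ≤ 2^Q.k/(a+1) := by
    gcongr
  linarith

lemma iUnion_cpt (hn : 0 < n) (Q : DyadicCube n) : (⋃ j, cpt Q j) = Q.set := by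
  apply Subset.antisymm
  · exact iUnion_subset (cpt_subset Q)
  · intro x hx
    have hne : (Finset.univ : Finset (Fin n)).Nonempty := by
      have : Nonempty (Fin n) := Fin.pos_iff_nonempty.mp hn
      exact Finset.univ_nonempty
    set δ : ℝ := Finset.univ.inf' hne (fun i => 2^Q.k * ((Q.m i : ℝ) + 1) - x i) with hδ
    have hδpos : 0 < δ := by
      rw [hδ]
      refine (Finset.lt_inf'_iff hne).mpr fun i _ => ?_
      have := (hx i).2
      linarith
    obtain ⟨j, hj⟩ := exists_nat_gt ((2:ℝ)^Q.k / δ)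
    refine mem_iUnion.mpr ⟨j, fun i => ⟨(hx i).1, ?_⟩⟩
    have hδle : δ ≤ 2^Q.k * ((Q.m i : ℝ) + 1) - x i :=
      Finset.inf'_le _ (Finset.mem_univ i)
    have hjpos : (0:ℝ) < j + 1 := by positivity
    have h2 : (2:ℝ)^Q.k / (j+1) < δ := by
      rw [div_lt_iff₀ hjpos]
      have h3 : (2:ℝ)^Q.k / δ < j := hj
      rw [div_lt_iff₀ hδpos] at h3
      nlinarith
    linarith


lemma real_bernoulli {t r : ℝ} (ht0 : 0 ≤ t) (ht1 : t ≤ 1) (hr0 : 0 ≤ r) (hr1 : r ≤ 1) :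
    t ^ r ≤ 1 - r + r * t := by
  have h := Real.geom_mean_le_arith_mean2_weighted hr0 (by linarith : (0:ℝ) ≤ 1 - r)
    ht0 zero_le_one (by ring)
  calc t ^ r = t ^ r * (1:ℝ) ^ ((1:ℝ)-r) := by rw [Real.one_rpow, mul_one]
    _ ≤ r * t + (1-r) * 1 := h
    _ = 1 - r + r * t := by ring

lemma real_self_le_rpow {t r : ℝ} (ht0 : 0 ≤ t) (ht1 : t ≤ 1) (hr0 : 0 < r) (hr1 : r ≤ 1) :
    t ≤ t ^ r := by
  rcases eq_or_lt_of_le ht0 with h | h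
  · rw [← h, Real.zero_rpow hr0.ne']
  · calc t = t ^ (1:ℝ) := (Real.rpow_one t).symm
      _ ≤ t ^ r := Real.rpow_le_rpow_of_exponent_ge h ht1 hr1

lemma enn_low {y d : ℝ≥0∞} (hfin : y + d ≠ ∞) {r : ℝ} (hr0 : 0 < r) (hr1 : r ≤ 1) :
    y ^ r + ENNReal.ofReal r * (d * (y + d) ^ (r - 1)) ≤ (y + d) ^ r := by
  rcases eq_or_ne (y + d) 0 with h0 | h0
  · have hy : y = 0 := by simpa using (add_eq_zero.mp h0).1
    have hd : d = 0 := by simpa using (add_eq_zero.mp h0).2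
    simp [hy, hd, ENNReal.zero_rpow_of_pos hr0]
  · have hy : y ≠ ∞ := fun h => hfin (by simp [h])
    have hd : d ≠ ∞ := fun h => hfin (by simp [h])
    set Y := y.toReal with hY
    set D := d.toReal with hD
    have hY0 : 0 ≤ Y := ENNReal.toReal_nonneg
    have hD0 : 0 ≤ D := ENNReal.toReal_nonneg
    have hX0 : 0 < Y + D := by
      rcases (lt_or_eq_of_le (by positivity : (0:ℝ) ≤ Y + D)) with h | h
      · exact h
      · exfalso; apply h0
        have : Y = 0 ∧ D = 0 := by constructor <;> linarith
        have hy0 : y = 0 := by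
          rw [← ENNReal.ofReal_toReal hy, ← hY, this.1]; simp
        have hd0 : d = 0 := by
          rw [← ENNReal.ofReal_toReal hd, ← hD, this.2]; simp
        rw [hy0, hd0, add_zero]
    -- real inequality
    have hreal : Y ^ r + r * (D * (Y + D) ^ (r - 1)) ≤ (Y + D) ^ r := by
      have hb := real_bernoulli (t := Y / (Y+D)) (by positivity)
        (by rw [div_le_one hX0]; linarith) hr0.le hr1
      have hdiv : (Y / (Y+D)) ^ r = Y ^ r / (Y+D) ^ r := Real.div_rpow hY0 (by positivity) r
      rw [hdiv] at hb
      have hXr : (0:ℝ) < (Y+D) ^ r := Real.rpow_pos_of_pos hX0 r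
      have hb2 : Y ^ r ≤ (1 - r + r * (Y / (Y+D))) * (Y+D) ^ r := by
        rw [div_le_iff₀ hXr] at hb
        linarith
      have hXr1 : (Y+D) ^ (r-1) * (Y+D) = (Y+D) ^ r := by
        rw [← Real.rpow_add_one hX0.ne' (r-1)]
        ring_nf
      have hexp : (1 - r + r * (Y / (Y+D))) * (Y+D) ^ r
          = (Y+D) ^ r - r * (D * (Y + D) ^ (r - 1)) := by
        have : (Y / (Y+D)) * (Y+D) ^ r = Y * (Y+D) ^ (r-1) := by
          rw [div_mul_eq_mul_div, ← hXr1]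
          field_simp
        have hDY : D = (Y + D) - Y := by ring
        nlinarith [hXr1]
      rw [hexp] at hb2
      linarith
    -- transfer to ENNReal
    have hyY : y = ENNReal.ofReal Y := (ENNReal.ofReal_toReal hy).symm
    have hdD : d = ENNReal.ofReal D := (ENNReal.ofReal_toReal hd).symm
    have hsum : y + d = ENNReal.ofReal (Y + D) := by
      rw [hyY, hdD, ENNReal.ofReal_add hY0 hD0]
    rw [hsum, hyY, hdD, ENNReal.ofReal_rpow_of_nonneg hY0 hr0.le,
      ENNReal.ofReal_rpow_of_pos hX0, ENNReal.ofReal_rpow_of_pos hX0,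
      ← ENNReal.ofReal_mul (by positivity), ← ENNReal.ofReal_mul hr0.le,
      ← ENNReal.ofReal_add (by positivity) (by positivity)]
    exact ENNReal.ofReal_le_ofReal (by linarith)

lemma enn_up {y d : ℝ≥0∞} (hfin : y + d ≠ ∞) {r : ℝ} (hr0 : 0 < r) (hr1 : r ≤ 1) :
    (y + d) ^ r ≤ y ^ r + d * (y + d) ^ (r - 1) := by
  rcases eq_or_ne (y + d) 0 with h0 | h0
  · have hy : y = 0 := by simpa using (add_eq_zero.mp h0).1
    have hd : d = 0 := by simpa using (add_eq_zero.mp h0).2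
    simp [hy, hd, ENNReal.zero_rpow_of_pos hr0]
  · have hy : y ≠ ∞ := fun h => hfin (by simp [h])
    have hd : d ≠ ∞ := fun h => hfin (by simp [h])
    set Y := y.toReal with hY
    set D := d.toReal with hD
    have hY0 : 0 ≤ Y := ENNReal.toReal_nonneg
    have hD0 : 0 ≤ D := ENNReal.toReal_nonneg
    have hX0 : 0 < Y + D := by
      rcases (lt_or_eq_of_le (by positivity : (0:ℝ) ≤ Y + D)) with h | h
      · exact h
      · exfalso; apply h0
        have h1 : Y = 0 ∧ D = 0 := by constructor <;> linarith
        have hy0 : y = 0 := by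
          rw [← ENNReal.ofReal_toReal hy, ← hY, h1.1]; simp
        have hd0 : d = 0 := by
          rw [← ENNReal.ofReal_toReal hd, ← hD, h1.2]; simp
        rw [hy0, hd0, add_zero]
    have hreal : (Y + D) ^ r ≤ Y ^ r + D * (Y + D) ^ (r - 1) := by
      have hb := real_self_le_rpow (t := Y / (Y+D)) (by positivity)
        (by rw [div_le_one hX0]; linarith) hr0 hr1
      have hdiv : (Y / (Y+D)) ^ r = Y ^ r / (Y+D) ^ r := Real.div_rpow hY0 (by positivity) r
      rw [hdiv] at hb
      have hXr : (0:ℝ) < (Y+D) ^ r := Real.rpow_pos_of_pos hX0 r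
      have hb2 : (Y / (Y+D)) * (Y+D) ^ r ≤ Y ^ r := by
        rw [← le_div_iff₀ hXr] at *
        exact hb
      have hXr1 : (Y+D) ^ (r-1) * (Y+D) = (Y+D) ^ r := by
        rw [← Real.rpow_add_one hX0.ne' (r-1)]
        ring_nf
      have h3 : (Y / (Y+D)) * (Y+D) ^ r = Y * (Y+D) ^ (r-1) := by
        rw [div_mul_eq_mul_div, ← hXr1]
        field_simp
      rw [h3] at hb2
      nlinarith [hXr1]
    have hyY : y = ENNReal.ofReal Y := (ENNReal.ofReal_toReal hy).symm
    have hdD : d = ENNReal.ofReal D := (ENNReal.ofReal_toReal hd).symm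
    have hsum : y + d = ENNReal.ofReal (Y + D) := by
      rw [hyY, hdD, ENNReal.ofReal_add hY0 hD0]
    rw [hsum, hyY, hdD, ENNReal.ofReal_rpow_of_nonneg hY0 hr0.le,
      ENNReal.ofReal_rpow_of_pos hX0, ENNReal.ofReal_rpow_of_pos hX0,
      ← ENNReal.ofReal_mul hD0,
      ← ENNReal.ofReal_add (by positivity) (by positivity)]
    exact ENNReal.ofReal_le_ofReal (by linarith)

/-- lower telescoping bound: `r · Σ aⱼ Sⱼ₊₁^{r-1} ≤ (Σ a)^r`. -/
lemma key_low {a : ℕ → ℝ≥0∞} {r : ℝ} (hr0 : 0 < r) (hr1 : r ≤ 1) :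
    ENNReal.ofReal r * ∑' j, a j * (∑ i ∈ Finset.range (j+1), a i) ^ (r - 1)
      ≤ (∑' j, a j) ^ r := by
  by_cases htop : (∑' j, a j) = ∞
  · rw [htop, ENNReal.top_rpow_of_pos hr0]; exact le_top
  have hfin : ∀ N, (∑ i ∈ Finset.range N, a i) ≠ ∞ :=
    fun N => ne_top_of_le_ne_top htop (ENNReal.sum_le_tsum _)
  have hstep : ∀ N, ENNReal.ofReal r *
      ∑ j ∈ Finset.range N, a j * (∑ i ∈ Finset.range (j+1), a i) ^ (r - 1)
        ≤ (∑ i ∈ Finset.range N, a i) ^ r := by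
    intro N
    induction N with
    | zero => simp
    | succ N ih =>
      have hsplit : ∑ j ∈ Finset.range (N+1), a j * (∑ i ∈ Finset.range (j+1), a i) ^ (r - 1)
          = (∑ j ∈ Finset.range N, a j * (∑ i ∈ Finset.range (j+1), a i) ^ (r - 1))
            + a N * (∑ i ∈ Finset.range (N+1), a i) ^ (r-1) :=
        Finset.sum_range_succ _ N
      rw [hsplit, mul_add]
      have hlow := enn_low (y := ∑ i ∈ Finset.range N, a i) (d := a N)
        (by rw [← Finset.sum_range_succ]; exact hfin (N+1)) hr0 hr1
      rw [← Finset.sum_range_succ] at hlow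
      calc ENNReal.ofReal r *
            (∑ j ∈ Finset.range N, a j * (∑ i ∈ Finset.range (j+1), a i) ^ (r - 1))
            + ENNReal.ofReal r * (a N * (∑ i ∈ Finset.range (N+1), a i) ^ (r-1))
          ≤ (∑ i ∈ Finset.range N, a i) ^ r
            + ENNReal.ofReal r * (a N * (∑ i ∈ Finset.range (N+1), a i) ^ (r-1)) :=
            add_le_add_left ih _
        _ ≤ (∑ i ∈ Finset.range (N+1), a i) ^ r := hlow
  calc ENNReal.ofReal r * ∑' j, a j * (∑ i ∈ Finset.range (j+1), a i) ^ (r - 1)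
      = ⨆ N, ENNReal.ofReal r *
          ∑ j ∈ Finset.range N, a j * (∑ i ∈ Finset.range (j+1), a i) ^ (r - 1) := by
        rw [ENNReal.tsum_eq_iSup_nat, ENNReal.mul_iSup]
    _ ≤ (∑' j, a j) ^ r := by
        refine iSup_le fun N => le_trans (hstep N) ?_
        exact ENNReal.rpow_le_rpow (ENNReal.sum_le_tsum _) hr0.le

/-- upper telescoping bound for finite sums of finite terms. -/
lemma key_up {a : ℕ → ℝ≥0∞} (hfin : ∀ j, a j ≠ ∞) {r : ℝ} (hr0 : 0 < r) (hr1 : r ≤ 1)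
    (N : ℕ) :
    (∑ i ∈ Finset.range N, a i) ^ r
      ≤ ∑ j ∈ Finset.range N, a j * (∑ i ∈ Finset.range (j+1), a i) ^ (r - 1) := by
  have hSfin : ∀ M, (∑ i ∈ Finset.range M, a i) ≠ ∞ := by
    intro M
    refine (ENNReal.sum_lt_top.mpr ?_).ne
    exact fun i _ => (hfin i).lt_top
  induction N with
  | zero => simp [ENNReal.zero_rpow_of_pos hr0]
  | succ N ih =>
    have hsplit : ∑ j ∈ Finset.range (N+1), a j * (∑ i ∈ Finset.range (j+1), a i) ^ (r - 1)
        = (∑ j ∈ Finset.range N, a j * (∑ i ∈ Finset.range (j+1), a i) ^ (r - 1))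
          + a N * (∑ i ∈ Finset.range (N+1), a i) ^ (r-1) :=
      Finset.sum_range_succ _ N
    rw [hsplit]
    have hup := enn_up (y := ∑ i ∈ Finset.range N, a i) (d := a N)
      (by rw [← Finset.sum_range_succ]; exact hSfin (N+1)) hr0 hr1
    rw [← Finset.sum_range_succ] at hup
    exact le_trans hup (add_le_add_left ih _)

/-- Hölder's inequality for `tsum`s in `ℝ≥0∞`, exponents `r, 1-r`. -/
lemma tsum_holder {ι : Type*} (f g : ι → ℝ≥0∞) {r : ℝ} (hr0 : 0 < r) (hr1 : r ≤ 1) :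
    ∑' i, (f i) ^ r * (g i) ^ (1 - r) ≤ (∑' i, f i) ^ r * (∑' i, g i) ^ (1-r) := by
  rcases eq_or_lt_of_le hr1 with h1 | h1
  · simp [h1, ENNReal.rpow_one]
  · letI : MeasurableSpace ι := ⊤
    haveI : MeasurableSingletonClass ι := ⟨fun _ => trivial⟩
    have hpq : (1/r).HolderConjugate (1/(1-r)) := by
      rw [Real.holderConjugate_iff]
      constructor
      · rw [lt_div_iff₀ hr0]; linarith
      · rw [one_div, inv_inv, one_div, inv_inv]; ring
    have H := ENNReal.lintegral_mul_le_Lp_mul_Lq (μ := Measure.count)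
      hpq (f := fun i => (f i) ^ r) (g := fun i => (g i) ^ (1-r))
      measurable_from_top.aemeasurable measurable_from_top.aemeasurable
    simp only [Pi.mul_apply] at H
    rw [lintegral_count] at H
    have hf1 : ∀ i, ((f i) ^ r) ^ (1/r) = f i := by
      intro i
      rw [← ENNReal.rpow_mul, mul_one_div, div_self hr0.ne', ENNReal.rpow_one]
    have hg1 : ∀ i, ((g i) ^ (1-r)) ^ (1/(1-r)) = g i := by
      intro i
      rw [← ENNReal.rpow_mul, mul_one_div, div_self (by linarith : 1 - r ≠ 0), ENNReal.rpow_one]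
    simp only [hf1, hg1] at H
    rw [lintegral_count, lintegral_count] at H
    have e1 : (1:ℝ)/(1/r) = r := by rw [one_div_one_div]
    have e2 : (1:ℝ)/(1/(1-r)) = 1-r := by rw [one_div_one_div]
    rw [e1, e2] at H
    exact H

/-- `tsum` commutes with monotone `iSup`. -/
lemma tsum_iSup_mono {ι : Type*} [Countable ι] (f : ℕ → ι → ℝ≥0∞) (hf : Monotone f) :
    ∑' i, ⨆ m, f m i = ⨆ m, ∑' i, f m i := by
  letI : MeasurableSpace ι := ⊤
  haveI : MeasurableSingletonClass ι := ⟨fun _ => trivial⟩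
  calc ∑' i, ⨆ m, f m i = ∫⁻ i, ⨆ m, f m i ∂(Measure.count) := (lintegral_count _).symm
    _ = ⨆ m, ∫⁻ i, f m i ∂(Measure.count) :=
        lintegral_iSup (fun m => measurable_from_top) hf
    _ = ⨆ m, ∑' i, f m i := by simp only [lintegral_count]

lemma rpow_iSup {x : ℕ → ℝ≥0∞} {c : ℝ} (hc : 0 < c) :
    (⨆ m, x m) ^ c = ⨆ m, (x m) ^ c := by
  have h := (ENNReal.orderIsoRpow c hc).map_iSup x
  simp only [ENNReal.orderIsoRpow_apply] at h
  exact h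



/-- repackaging a double-condition subtype as a subtype of a subtype -/
def subsubEquiv {α : Type*} (p q : α → Prop) :
    {a : α // q a ∧ p a} ≃ {x : {a : α // p a} // x ∈ {y : {a : α // p a} | q y.1}} where
  toFun a := ⟨⟨a.1, a.2.2⟩, a.2.1⟩
  invFun x := ⟨x.1.1, x.2, x.1.2⟩
  left_inv a := rfl
  right_inv x := rfl

lemma tsum_subsub {α : Type*} (p q : α → Prop) (F : α → ℝ≥0∞) :
    ∑' x : {a : α // q a ∧ p a}, F x.1
      = ∑' x : {a : α // p a},
          Set.indicator {y : {a : α // p a} | q y.1} (fun y => F y.1) x := by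
  rw [← tsum_subtype {y : {a : α // p a} | q y.1} (fun y => F y.1)]
  exact (subsubEquiv p q).tsum_eq (fun x => F x.1.1)

def subsubEquiv2 {α : Type*} (p q : α → Prop) (hqp : ∀ a, q a → p a) :
    {a : α // q a} ≃ {x : {a : α // p a} // x ∈ {y : {a : α // p a} | q y.1}} where
  toFun a := ⟨⟨a.1, hqp a.1 a.2⟩, a.2⟩
  invFun x := ⟨x.1.1, x.2⟩
  left_inv a := rfl
  right_inv x := rfl

lemma tsum_subsub2 {α : Type*} (p q : α → Prop) (hqp : ∀ a, q a → p a) (F : α → ℝ≥0∞) :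
    ∑' x : {a : α // q a}, F x.1
      = ∑' x : {a : α // p a},
          Set.indicator {y : {a : α // p a} | q y.1} (fun y => F y.1) x := by
  rw [← tsum_subtype {y : {a : α // p a} | q y.1} (fun y => F y.1)]
  exact (subsubEquiv2 p q hqp).tsum_eq (fun x => F x.1.1)

lemma TI_alg {p : ℝ} (hp1 : 1 < p) (hp2 : p ≤ 2) {c σq L Uq : ℝ≥0∞}
    (hc0 : c ≠ 0) (hcf : c ≠ ∞) (hLf : L ≠ ∞) (hUf : Uq ≠ ∞)
    (hgU : c * L ^ (1/(p-1)) ≤ Uq) :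
    c * σq ^ (1/(p-1)) * L
      = ((c * L ^ (1/(p-1)) * Uq ^ (p-1-1)) * σq) ^ (p-1)
        * ((c * σq ^ (p/(p-1))) * Uq ^ (p-1)) ^ (1-(p-1)) := by
  have hr0 : (0:ℝ) < p - 1 := by linarith
  have hs0 : (0:ℝ) < 1/(p-1) := by positivity
  have h2p : (0:ℝ) ≤ 1 - (p-1) := by linarith
  have hpp0 : (0:ℝ) < p/(p-1) := by positivity
  rcases eq_or_ne L 0 with hL0 | hL0
  · simp only [hL0, ENNReal.zero_rpow_of_pos hs0, mul_zero, zero_mul,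
      ENNReal.zero_rpow_of_pos hr0]
  have hLs0 : L ^ (1/(p-1)) ≠ 0 := by
    simp [ENNReal.rpow_eq_zero_iff, hL0, hLf]
  have hU0 : (0:ℝ≥0∞) < Uq := lt_of_lt_of_le (ENNReal.mul_pos hc0 hLs0) hgU
  have hUa0 : ∀ y : ℝ, Uq ^ y ≠ 0 := fun y => (ENNReal.rpow_pos hU0 hUf).ne'
  rcases eq_or_ne σq 0 with hs' | hs'
  · simp only [hs', ENNReal.zero_rpow_of_pos hs0, ENNReal.zero_rpow_of_pos hpp0,
      mul_zero, zero_mul, ENNReal.zero_rpow_of_pos hr0]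
  rcases eq_or_ne σq ⊤ with hst | hst
  · have hz : ((⊤:ℝ≥0∞)) ^ (1-(p-1)) ≠ 0 := by
      rcases eq_or_lt_of_le h2p with h | h
      · rw [← h, ENNReal.rpow_zero]; exact one_ne_zero
      · rw [ENNReal.top_rpow_of_pos h]; exact ENNReal.top_ne_zero
    have hbase0 : c * L ^ (1/(p-1)) * Uq ^ (p-1-1) ≠ 0 :=
      (ENNReal.mul_pos (ENNReal.mul_pos hc0 hLs0).ne' (hUa0 _)).ne'
    rw [hst, ENNReal.top_rpow_of_pos hs0, ENNReal.mul_top hc0, ENNReal.top_mul hL0,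
      ENNReal.mul_top hbase0, ENNReal.top_rpow_of_pos hr0, ENNReal.top_rpow_of_pos hpp0,
      ENNReal.mul_top hc0, ENNReal.top_mul (hUa0 (p-1)), ENNReal.top_mul hz]
  · -- main case : everything in (0, ∞)
    symm
    have hc' : c ^ (p-1) * c ^ (1-(p-1)) = c := by
      rw [← ENNReal.rpow_add _ _ hc0 hcf]
      norm_num
    have hσ' : σq ^ (p-1) * σq ^ ((p/(p-1))*(1-(p-1))) = σq ^ (1/(p-1)) := by
      rw [← ENNReal.rpow_add _ _ hs' hst]
      congr 1
      field_simp
      ring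
    have hU' : Uq ^ ((p-1-1)*(p-1)) * Uq ^ ((p-1)*(1-(p-1))) = 1 := by
      rw [← ENNReal.rpow_add _ _ hU0.ne' hUf,
        show ((p-1-1)*(p-1) + (p-1)*(1-(p-1))) = 0 by ring, ENNReal.rpow_zero]
    calc ((c * L ^ (1/(p-1)) * Uq ^ (p-1-1)) * σq) ^ (p-1)
          * ((c * σq ^ (p/(p-1))) * Uq ^ (p-1)) ^ (1-(p-1))
        = (c ^ (p-1) * c ^ (1-(p-1)))
            * ((σq ^ (p-1) * σq ^ ((p/(p-1))*(1-(p-1))))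
              * ((Uq ^ ((p-1-1)*(p-1)) * Uq ^ ((p-1)*(1-(p-1)))) * L)) := by
          rw [ENNReal.mul_rpow_of_nonneg _ σq hr0.le,
            ENNReal.mul_rpow_of_nonneg _ (Uq ^ (p-1-1)) hr0.le,
            ENNReal.mul_rpow_of_nonneg c _ hr0.le,
            ENNReal.mul_rpow_of_nonneg _ (Uq ^ (p-1)) h2p,
            ENNReal.mul_rpow_of_nonneg c _ h2p,
            ← ENNReal.rpow_mul L, ← ENNReal.rpow_mul Uq, ← ENNReal.rpow_mul σq,
            ← ENNReal.rpow_mul Uq,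
            show (1/(p-1))*(p-1) = 1 by field_simp, ENNReal.rpow_one]
          ring
      _ = c * σq ^ (1/(p-1)) * L := by
          rw [hc', hσ', hU']
          ring

set_option maxHeartbeats 2000000 in
theorem stmt8' (n : ℕ) (hn : 2 ≤ n) (p : ℝ) (hp1 : 1 < p) (hp2 : p ≤ 2) (A : ℝ) (hA : 0 < A) :
    ∃ C : ℝ, 0 < C ∧
      ∀ (σt : Measure (EuclideanSpace ℝ (Fin n))), DiscCarlE p σt A →
        ∀ (lam : DyadicCube n → ℝ≥0∞) (P : DyadicCube n),
          ENNReal.ofReal C *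
              ∑' Q : {Q : DyadicCube n // Q.set ⊆ P.set},
                ENNReal.ofReal (cQ p Q.1) * σt Q.1.set ^ (1 / (p - 1)) * lam Q.1
          ≤ ∫⁻ x in P.set,
              (∑' Q : {Q : DyadicCube n // x ∈ Q.set ∧ Q.set ⊆ P.set},
                  ENNReal.ofReal (cQ p Q.1) * lam Q.1 ^ (1 / (p - 1))) ^ (p - 1) ∂σt := by
  have hn0 : 0 < n := by omega
  have hr0 : (0:ℝ) < p - 1 := by linarith
  have hr1 : p - 1 ≤ 1 := by linarith
  have hs0 : (0:ℝ) < 1 / (p - 1) := by positivity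
  have hpp0 : (0:ℝ) < p / (p - 1) := by positivity
  have hA2 : (0:ℝ) < A ^ (2 - p) := Real.rpow_pos_of_pos hA _
  refine ⟨(p - 1) / A ^ (2 - p), by positivity, ?_⟩
  intro σ hcar lam P
  have hcc0 : ∀ Q : DyadicCube n, ENNReal.ofReal (cQ p Q) ≠ 0 := fun Q =>
    (ENNReal.ofReal_pos.mpr (Real.rpow_pos_of_pos (two_zpow_pos Q.k) _)).ne'
  -- Carleson inequality for whole dyadic cubes
  have carl_cube : ∀ R : DyadicCube n,
      (∑' Q : {Q : DyadicCube n // Q.set ⊆ R.set},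
        ENNReal.ofReal (cQ p Q.1) * σ Q.1.set ^ (p/(p-1))) ≤ ENNReal.ofReal A * σ R.set := by
    intro R
    have hdir : ∀ S : Set (EuclideanSpace ℝ (Fin n)),
        Directed (· ⊆ ·) (fun j : ℕ => S ∩ cpt R j) := by
      intro S
      have hm : Monotone (fun j : ℕ => S ∩ cpt R j) :=
        fun a b hab => inter_subset_inter_right _ (monotone_cpt R hab)
      exact hm.directed_le
    have hsup : ∀ Q : {Q : DyadicCube n // Q.set ⊆ R.set},
        σ Q.1.set = ⨆ j : ℕ, σ (Q.1.set ∩ cpt R j) := by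
      intro Q
      have hU : (⋃ j : ℕ, Q.1.set ∩ cpt R j) = Q.1.set := by
        rw [← Set.inter_iUnion, iUnion_cpt hn0 R, Set.inter_eq_self_of_subset_left Q.2]
      calc σ Q.1.set = σ (⋃ j : ℕ, Q.1.set ∩ cpt R j) := by rw [hU]
        _ = ⨆ j : ℕ, σ (Q.1.set ∩ cpt R j) := (hdir Q.1.set).measure_iUnion
    have hmono : Monotone (fun j : ℕ => fun Q : {Q : DyadicCube n // Q.set ⊆ R.set} =>
        ENNReal.ofReal (cQ p Q.1) * σ (Q.1.set ∩ cpt R j) ^ (p/(p-1))) := by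
      intro a b hab
      intro Q
      exact mul_le_mul_right (ENNReal.rpow_le_rpow
        (measure_mono (inter_subset_inter_right _ (monotone_cpt R hab))) hpp0.le) _
    calc (∑' Q : {Q : DyadicCube n // Q.set ⊆ R.set},
          ENNReal.ofReal (cQ p Q.1) * σ Q.1.set ^ (p/(p-1)))
        = ∑' Q : {Q : DyadicCube n // Q.set ⊆ R.set},
            ⨆ j : ℕ, ENNReal.ofReal (cQ p Q.1) * σ (Q.1.set ∩ cpt R j) ^ (p/(p-1)) := by
          refine tsum_congr fun Q => ?_
          rw [hsup Q, rpow_iSup hpp0, ENNReal.mul_iSup]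
      _ = ⨆ j : ℕ, ∑' Q : {Q : DyadicCube n // Q.set ⊆ R.set},
            ENNReal.ofReal (cQ p Q.1) * σ (Q.1.set ∩ cpt R j) ^ (p/(p-1)) :=
          tsum_iSup_mono (fun j : ℕ => fun Q : {Q : DyadicCube n // Q.set ⊆ R.set} =>
            ENNReal.ofReal (cQ p Q.1) * σ (Q.1.set ∩ cpt R j) ^ (p/(p-1))) hmono
      _ ≤ ⨆ j : ℕ, ENNReal.ofReal A * σ (R.set ∩ cpt R j) :=
          iSup_mono fun j => hcar R (cpt R j) (isCompact_cpt R j)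
      _ ≤ ENNReal.ofReal A * σ R.set :=
          iSup_le fun j => mul_le_mul_right (measure_mono inter_subset_left) _
  -- conversion of x-dependent subtype sums to indicator sums
  have hconv : ∀ (x : EuclideanSpace ℝ (Fin n)) (F : DyadicCube n → ℝ≥0∞),
      (∑' Q : {Q : DyadicCube n // x ∈ Q.set ∧ Q.set ⊆ P.set}, F Q.1)
        = ∑' Q : {Q : DyadicCube n // Q.set ⊆ P.set},
            Q.1.set.indicator (fun _ => F Q.1) x := by
    intro x F
    rw [tsum_subsub (fun Q : DyadicCube n => Q.set ⊆ P.set) (fun Q => x ∈ Q.set) F]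
    refine tsum_congr fun Q => ?_
    by_cases hx : x ∈ Q.1.set
    · rw [Set.indicator_of_mem (by exact hx), Set.indicator_of_mem hx]
    · rw [Set.indicator_of_notMem (by exact hx), Set.indicator_of_notMem hx]
  -- the main estimate, for finite truncations
  have main : ∀ lam' : DyadicCube n → ℝ≥0∞, (∀ Q, lam' Q ≠ ∞) → (∀ Q, lam' Q ≤ lam Q) →
      ENNReal.ofReal ((p-1)/A^(2-p)) * ∑' Q : {Q : DyadicCube n // Q.set ⊆ P.set},
          ENNReal.ofReal (cQ p Q.1) * σ Q.1.set ^ (1/(p-1)) * lam' Q.1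
        ≤ ∫⁻ x in P.set, (∑' Q : {Q : DyadicCube n // x ∈ Q.set ∧ Q.set ⊆ P.set},
            ENNReal.ofReal (cQ p Q.1) * lam Q.1 ^ (1/(p-1))) ^ (p-1) ∂σ := by
    intro lam' hfin' hle'
    set g : DyadicCube n → ℝ≥0∞ :=
      fun R => ENNReal.ofReal (cQ p R) * lam' R ^ (1/(p-1)) with hg
    set U : DyadicCube n → ℝ≥0∞ := fun Q =>
      ∑ j ∈ Finset.range ((P.k - Q.k).toNat + 1), g (anc (corner Q) (P.k - (j:ℕ))) with hU
    have hg_fin : ∀ R, g R ≠ ∞ := fun R => by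
      simp only [hg]
      exact ENNReal.mul_ne_top ENNReal.ofReal_ne_top
        (ENNReal.rpow_ne_top_of_nonneg hs0.le (hfin' R))
    have hU_fin : ∀ Q, U Q ≠ ∞ := fun Q => by
      simp only [hU]
      exact (ENNReal.sum_lt_top.mpr fun j _ => (hg_fin _).lt_top).ne
    have hUchain : ∀ x ∈ P.set, ∀ j : ℕ,
        ∑ i ∈ Finset.range (j+1), g (anc x (P.k - (i:ℕ))) = U (anc x (P.k - (j:ℕ))) := by
      intro x hx j
      simp only [hU, anc_k]
      rw [show ((P.k - (P.k - (j:ℕ))).toNat + 1) = j + 1 by omega]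
      refine Finset.sum_congr rfl fun i hi => ?_
      have hij : (i:ℤ) ≤ (j:ℤ) := by
        have := Finset.mem_range.mp hi; omega
      congr 1
      exact (anc_corner_eq (mem_anc x (P.k - (j:ℕ))) (by rw [anc_k]; omega)).symm
    have hU_ge : ∀ Q : DyadicCube n, Q.set ⊆ P.set → g Q ≤ U Q := by
      intro Q hQP
      have hk := k_le_of_subset hn0 hQP
      have hself : anc (corner Q) (P.k - (((P.k - Q.k).toNat : ℕ) : ℤ)) = Q := by
        rw [show (P.k - (((P.k - Q.k).toNat : ℕ) : ℤ)) = Q.k by omega]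
        exact (eq_anc_of_mem (corner_mem Q)).symm
      simp only [hU]
      calc g Q = g (anc (corner Q) (P.k - (((P.k - Q.k).toNat : ℕ) : ℤ))) := by rw [hself]
        _ ≤ _ := Finset.single_le_sum
            (f := fun j : ℕ => g (anc (corner Q) (P.k - (j:ℕ))))
            (fun _ _ => zero_le) (Finset.self_mem_range_succ _)
    -- Step 1 : lower bound on the Wolff integral
    have step1 : ENNReal.ofReal (p-1) * (∑' Q : {Q : DyadicCube n // Q.set ⊆ P.set},
          (g Q.1 * U Q.1 ^ (p-1-1)) * σ Q.1.set)
        ≤ ∫⁻ x in P.set, (∑' Q : {Q : DyadicCube n // x ∈ Q.set ∧ Q.set ⊆ P.set},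
            ENNReal.ofReal (cQ p Q.1) * lam Q.1 ^ (1/(p-1))) ^ (p-1) ∂σ := by
      have hpt : ∀ x, x ∈ P.set →
          ENNReal.ofReal (p-1) * ∑' Q : {Q : DyadicCube n // x ∈ Q.set ∧ Q.set ⊆ P.set},
              (g Q.1 * U Q.1 ^ (p-1-1))
            ≤ (∑' Q : {Q : DyadicCube n // x ∈ Q.set ∧ Q.set ⊆ P.set},
              ENNReal.ofReal (cQ p Q.1) * lam Q.1 ^ (1/(p-1))) ^ (p-1) := by
        intro x hx
        have h1 : (∑' j : ℕ, g (anc x (P.k - (j:ℕ)))) ^ (p-1)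
            ≤ (∑' Q : {Q : DyadicCube n // x ∈ Q.set ∧ Q.set ⊆ P.set},
              ENNReal.ofReal (cQ p Q.1) * lam Q.1 ^ (1/(p-1))) ^ (p-1) := by
          refine ENNReal.rpow_le_rpow ?_ hr0.le
          rw [← tsum_chain hn0 P x hx g]
          refine ENNReal.tsum_le_tsum fun Q => ?_
          simp only [hg]
          exact mul_le_mul_right (ENNReal.rpow_le_rpow (hle' Q.1) hs0.le) _
        refine le_trans ?_ (le_trans (key_low hr0 hr1) h1)
        refine le_of_eq ?_
        congr 1
        rw [tsum_chain hn0 P x hx (fun R => g R * U R ^ (p-1-1))]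
        refine tsum_congr fun j => ?_
        rw [hUchain x hx j]
      have hint : (∫⁻ x in P.set, ∑' Q : {Q : DyadicCube n // Q.set ⊆ P.set},
          Q.1.set.indicator (fun _ => g Q.1 * U Q.1 ^ (p-1-1)) x ∂σ)
            = ∑' Q : {Q : DyadicCube n // Q.set ⊆ P.set},
              (g Q.1 * U Q.1 ^ (p-1-1)) * σ Q.1.set := by
        rw [lintegral_tsum (f := fun (Q : {Q : DyadicCube n // Q.set ⊆ P.set})
            (x : EuclideanSpace ℝ (Fin n)) =>
              Q.1.set.indicator (fun _ => g Q.1 * U Q.1 ^ (p-1-1)) x)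
          (fun Q => (measurable_const.indicator (measurableSet_set Q.1)).aemeasurable)]
        refine tsum_congr fun Q => ?_
        rw [lintegral_indicator (measurableSet_set Q.1), setLIntegral_const,
          Measure.restrict_apply (measurableSet_set Q.1),
          Set.inter_eq_self_of_subset_left Q.2]
      calc ENNReal.ofReal (p-1) * (∑' Q : {Q : DyadicCube n // Q.set ⊆ P.set},
            (g Q.1 * U Q.1 ^ (p-1-1)) * σ Q.1.set)
          = ∫⁻ x in P.set, ENNReal.ofReal (p-1) *
              ∑' Q : {Q : DyadicCube n // Q.set ⊆ P.set},
                Q.1.set.indicator (fun _ => g Q.1 * U Q.1 ^ (p-1-1)) x ∂σ := by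
            rw [lintegral_const_mul' _ _ ENNReal.ofReal_ne_top, hint]
        _ ≤ _ := by
            refine lintegral_mono_ae ?_
            filter_upwards [ae_restrict_mem (measurableSet_set P)] with x hx
            rw [← hconv x (fun R => g R * U R ^ (p-1-1))]
            exact hpt x hx
    -- Step 2 : Carleson bound on Y
    have hper : ∀ Q : {Q : DyadicCube n // Q.set ⊆ P.set},
        U Q.1 ^ (p-1) ≤ ∑' R : {R : DyadicCube n // Q.1.set ⊆ R.set ∧ R.set ⊆ P.set},
          g R.1 * U R.1 ^ (p-1-1) := by
      intro Q
      rw [tsum_up hn0 Q.2 (fun R => g R * U R ^ (p-1-1))]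
      have hcm : corner Q.1 ∈ P.set := Q.2 (corner_mem Q.1)
      have hkey := key_up (a := fun j : ℕ => g (anc (corner Q.1) (P.k - (j:ℕ))))
        (fun j => hg_fin _) hr0 hr1 ((P.k - Q.1.k).toNat + 1)
      have hUeq : U Q.1 = ∑ i ∈ Finset.range ((P.k - Q.1.k).toNat + 1),
          g (anc (corner Q.1) (P.k - (i:ℕ))) := by simp only [hU]
      rw [hUeq]
      refine le_trans hkey (le_of_eq ?_)
      refine Finset.sum_congr rfl fun j hj => ?_
      rw [hUchain (corner Q.1) hcm j]
    have step2 : (∑' Q : {Q : DyadicCube n // Q.set ⊆ P.set},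
          (ENNReal.ofReal (cQ p Q.1) * σ Q.1.set ^ (p/(p-1))) * U Q.1 ^ (p-1))
        ≤ ENNReal.ofReal A * ∑' Q : {Q : DyadicCube n // Q.set ⊆ P.set},
            (g Q.1 * U Q.1 ^ (p-1-1)) * σ Q.1.set := by
      have h1 : ∀ Q : {Q : DyadicCube n // Q.set ⊆ P.set},
          (ENNReal.ofReal (cQ p Q.1) * σ Q.1.set ^ (p/(p-1)))
            * ∑' R : {R : DyadicCube n // Q.1.set ⊆ R.set ∧ R.set ⊆ P.set},
              g R.1 * U R.1 ^ (p-1-1)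
          = ∑' R : {R : DyadicCube n // R.set ⊆ P.set},
              Set.indicator {R' : {R : DyadicCube n // R.set ⊆ P.set} | Q.1.set ⊆ R'.1.set}
                (fun R' => (ENNReal.ofReal (cQ p Q.1) * σ Q.1.set ^ (p/(p-1)))
                  * (g R'.1 * U R'.1 ^ (p-1-1))) R := by
        intro Q
        rw [← ENNReal.tsum_mul_left]
        exact tsum_subsub (fun R : DyadicCube n => R.set ⊆ P.set)
          (fun R => Q.1.set ⊆ R.set)
          (fun R => (ENNReal.ofReal (cQ p Q.1) * σ Q.1.set ^ (p/(p-1)))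
            * (g R * U R ^ (p-1-1)))
      have h2 : ∀ R : {R : DyadicCube n // R.set ⊆ P.set},
          (∑' Q : {Q : DyadicCube n // Q.set ⊆ P.set},
            Set.indicator {R' : {R : DyadicCube n // R.set ⊆ P.set} | Q.1.set ⊆ R'.1.set}
              (fun R' => (ENNReal.ofReal (cQ p Q.1) * σ Q.1.set ^ (p/(p-1)))
                * (g R'.1 * U R'.1 ^ (p-1-1))) R)
          ≤ (ENNReal.ofReal A * σ R.1.set) * (g R.1 * U R.1 ^ (p-1-1)) := by
        intro R
        have h3 : ∀ Q : {Q : DyadicCube n // Q.set ⊆ P.set},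
            Set.indicator {R' : {R : DyadicCube n // R.set ⊆ P.set} | Q.1.set ⊆ R'.1.set}
              (fun R' => (ENNReal.ofReal (cQ p Q.1) * σ Q.1.set ^ (p/(p-1)))
                * (g R'.1 * U R'.1 ^ (p-1-1))) R
            = (Set.indicator {Q' : {Q : DyadicCube n // Q.set ⊆ P.set} | Q'.1.set ⊆ R.1.set}
                (fun Q' => ENNReal.ofReal (cQ p Q'.1) * σ Q'.1.set ^ (p/(p-1))) Q)
              * (g R.1 * U R.1 ^ (p-1-1)) := by
          intro Q
          by_cases hc : Q.1.set ⊆ R.1.set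
          · rw [Set.indicator_of_mem (by exact hc), Set.indicator_of_mem (by exact hc)]
          · rw [Set.indicator_of_notMem (by exact hc),
              Set.indicator_of_notMem (by exact hc), zero_mul]
        rw [tsum_congr h3, ENNReal.tsum_mul_right]
        refine mul_le_mul_left ?_ _
        calc (∑' Q : {Q : DyadicCube n // Q.set ⊆ P.set},
              Set.indicator {Q' : {Q : DyadicCube n // Q.set ⊆ P.set} | Q'.1.set ⊆ R.1.set}
                (fun Q' => ENNReal.ofReal (cQ p Q'.1) * σ Q'.1.set ^ (p/(p-1))) Q)
            = ∑' Q : {Q : DyadicCube n // Q.set ⊆ R.1.set},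
                ENNReal.ofReal (cQ p Q.1) * σ Q.1.set ^ (p/(p-1)) :=
              (tsum_subsub2 (fun Q : DyadicCube n => Q.set ⊆ P.set)
                (fun Q => Q.set ⊆ R.1.set) (fun a ha => ha.trans R.2)
                (fun Q => ENNReal.ofReal (cQ p Q) * σ Q.set ^ (p/(p-1)))).symm
          _ ≤ ENNReal.ofReal A * σ R.1.set := carl_cube R.1
      calc (∑' Q : {Q : DyadicCube n // Q.set ⊆ P.set},
            (ENNReal.ofReal (cQ p Q.1) * σ Q.1.set ^ (p/(p-1))) * U Q.1 ^ (p-1))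
          ≤ ∑' Q : {Q : DyadicCube n // Q.set ⊆ P.set},
              (ENNReal.ofReal (cQ p Q.1) * σ Q.1.set ^ (p/(p-1)))
                * ∑' R : {R : DyadicCube n // Q.1.set ⊆ R.set ∧ R.set ⊆ P.set},
                  g R.1 * U R.1 ^ (p-1-1) :=
            ENNReal.tsum_le_tsum fun Q => mul_le_mul_right (hper Q) _
        _ = ∑' R : {R : DyadicCube n // R.set ⊆ P.set},
              ∑' Q : {Q : DyadicCube n // Q.set ⊆ P.set},
              Set.indicator {R' : {R : DyadicCube n // R.set ⊆ P.set} | Q.1.set ⊆ R'.1.set}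
                (fun R' => (ENNReal.ofReal (cQ p Q.1) * σ Q.1.set ^ (p/(p-1)))
                  * (g R'.1 * U R'.1 ^ (p-1-1))) R := by
            rw [tsum_congr h1, ENNReal.tsum_comm]
        _ ≤ ∑' R : {R : DyadicCube n // R.set ⊆ P.set},
              (ENNReal.ofReal A * σ R.1.set) * (g R.1 * U R.1 ^ (p-1-1)) :=
            ENNReal.tsum_le_tsum h2
        _ = ENNReal.ofReal A * ∑' Q : {Q : DyadicCube n // Q.set ⊆ P.set},
              (g Q.1 * U Q.1 ^ (p-1-1)) * σ Q.1.set := by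
            rw [← ENNReal.tsum_mul_left]
            exact tsum_congr fun R => by ring
    -- Hölder
    have hholder : (∑' Q : {Q : DyadicCube n // Q.set ⊆ P.set},
          ENNReal.ofReal (cQ p Q.1) * σ Q.1.set ^ (1/(p-1)) * lam' Q.1)
        ≤ (∑' Q : {Q : DyadicCube n // Q.set ⊆ P.set},
            (g Q.1 * U Q.1 ^ (p-1-1)) * σ Q.1.set) ^ (p-1)
          * (∑' Q : {Q : DyadicCube n // Q.set ⊆ P.set},
            (ENNReal.ofReal (cQ p Q.1) * σ Q.1.set ^ (p/(p-1))) * U Q.1 ^ (p-1)) ^ (1-(p-1)) := by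
      have hTI : ∀ Q : {Q : DyadicCube n // Q.set ⊆ P.set},
          ENNReal.ofReal (cQ p Q.1) * σ Q.1.set ^ (1/(p-1)) * lam' Q.1
            = ((g Q.1 * U Q.1 ^ (p-1-1)) * σ Q.1.set) ^ (p-1)
              * ((ENNReal.ofReal (cQ p Q.1) * σ Q.1.set ^ (p/(p-1))) * U Q.1 ^ (p-1))
                ^ (1-(p-1)) := by
        intro Q
        have := TI_alg hp1 hp2 (c := ENNReal.ofReal (cQ p Q.1)) (σq := σ Q.1.set)
          (L := lam' Q.1) (Uq := U Q.1) (hcc0 Q.1) ENNReal.ofReal_ne_top (hfin' Q.1)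
          (hU_fin Q.1) (by simpa only [hg] using hU_ge Q.1 Q.2)
        simpa only [hg] using this
      rw [tsum_congr hTI]
      exact tsum_holder _ _ hr0 hr1
    -- combine
    by_cases hTtop : (∑' Q : {Q : DyadicCube n // Q.set ⊆ P.set},
        (g Q.1 * U Q.1 ^ (p-1-1)) * σ Q.1.set) = ∞
    · have h8 : (⊤:ℝ≥0∞) ≤ ∫⁻ x in P.set,
          (∑' Q : {Q : DyadicCube n // x ∈ Q.set ∧ Q.set ⊆ P.set},
            ENNReal.ofReal (cQ p Q.1) * lam Q.1 ^ (1/(p-1))) ^ (p-1) ∂σ := by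
        refine le_trans (le_of_eq ?_) step1
        rw [hTtop, ENNReal.mul_top (by simp [ENNReal.ofReal_eq_zero]; linarith)]
      exact le_trans le_top h8
    · by_cases hT0 : (∑' Q : {Q : DyadicCube n // Q.set ⊆ P.set},
          (g Q.1 * U Q.1 ^ (p-1-1)) * σ Q.1.set) = 0
      · have hLHS0 : (∑' Q : {Q : DyadicCube n // Q.set ⊆ P.set},
            ENNReal.ofReal (cQ p Q.1) * σ Q.1.set ^ (1/(p-1)) * lam' Q.1) = 0 := by
          refine le_antisymm ?_ (zero_le)
          refine le_trans hholder ?_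
          rw [hT0, ENNReal.zero_rpow_of_pos hr0, zero_mul]
        rw [hLHS0, mul_zero]
        exact zero_le
      · have hTT : (∑' Q : {Q : DyadicCube n // Q.set ⊆ P.set},
            (g Q.1 * U Q.1 ^ (p-1-1)) * σ Q.1.set) ^ (p-1)
              * ((∑' Q : {Q : DyadicCube n // Q.set ⊆ P.set},
                (g Q.1 * U Q.1 ^ (p-1-1)) * σ Q.1.set)) ^ (1-(p-1))
            = ∑' Q : {Q : DyadicCube n // Q.set ⊆ P.set},
                (g Q.1 * U Q.1 ^ (p-1-1)) * σ Q.1.set := by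
          rw [← ENNReal.rpow_add _ _ hT0 hTtop]
          norm_num
        calc ENNReal.ofReal ((p-1)/A^(2-p)) * ∑' Q : {Q : DyadicCube n // Q.set ⊆ P.set},
              ENNReal.ofReal (cQ p Q.1) * σ Q.1.set ^ (1/(p-1)) * lam' Q.1
            ≤ ENNReal.ofReal ((p-1)/A^(2-p)) *
                ((∑' Q : {Q : DyadicCube n // Q.set ⊆ P.set},
                  (g Q.1 * U Q.1 ^ (p-1-1)) * σ Q.1.set) ^ (p-1)
                * (∑' Q : {Q : DyadicCube n // Q.set ⊆ P.set},
                  (ENNReal.ofReal (cQ p Q.1) * σ Q.1.set ^ (p/(p-1))) * U Q.1 ^ (p-1))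
                    ^ (1-(p-1))) :=
              mul_le_mul_right hholder _
          _ ≤ ENNReal.ofReal ((p-1)/A^(2-p)) *
                ((∑' Q : {Q : DyadicCube n // Q.set ⊆ P.set},
                  (g Q.1 * U Q.1 ^ (p-1-1)) * σ Q.1.set) ^ (p-1)
                * ((ENNReal.ofReal A) ^ (1-(p-1))
                  * (∑' Q : {Q : DyadicCube n // Q.set ⊆ P.set},
                    (g Q.1 * U Q.1 ^ (p-1-1)) * σ Q.1.set) ^ (1-(p-1)))) := by
              refine mul_le_mul_right (mul_le_mul_right ?_ _) _
              calc (∑' Q : {Q : DyadicCube n // Q.set ⊆ P.set},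
                    (ENNReal.ofReal (cQ p Q.1) * σ Q.1.set ^ (p/(p-1))) * U Q.1 ^ (p-1))
                      ^ (1-(p-1))
                  ≤ (ENNReal.ofReal A * ∑' Q : {Q : DyadicCube n // Q.set ⊆ P.set},
                      (g Q.1 * U Q.1 ^ (p-1-1)) * σ Q.1.set) ^ (1-(p-1)) :=
                    ENNReal.rpow_le_rpow step2 (by linarith)
                _ = _ := ENNReal.mul_rpow_of_nonneg _ _ (by linarith)
          _ = ENNReal.ofReal (p-1) * ∑' Q : {Q : DyadicCube n // Q.set ⊆ P.set},
                (g Q.1 * U Q.1 ^ (p-1-1)) * σ Q.1.set := by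
              have hCA : ENNReal.ofReal ((p-1)/A^(2-p)) * (ENNReal.ofReal A) ^ (1-(p-1))
                  = ENNReal.ofReal (p-1) := by
                rw [show (1:ℝ)-(p-1) = 2 - p by ring, ENNReal.ofReal_rpow_of_pos hA,
                  ← ENNReal.ofReal_mul (by positivity), div_mul_cancel₀ _ hA2.ne']
              rw [show ∀ a b c : ℝ≥0∞, a * (b ^ (p-1) * (c * b ^ (1-(p-1))))
                  = (a * c) * (b ^ (p-1) * b ^ (1-(p-1))) from fun a b c => by ring,
                hCA, hTT]
          _ ≤ _ := step1
  -- limiting argument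
  have hub : ∀ m : ℕ, (∀ Q : DyadicCube n, min (lam Q) ((m:ℕ):ℝ≥0∞) ≠ ∞) := fun m Q =>
    ne_top_of_le_ne_top (ENNReal.natCast_ne_top m) (min_le_right _ _)
  have hmono : Monotone (fun m : ℕ => fun Q : {Q : DyadicCube n // Q.set ⊆ P.set} =>
      ENNReal.ofReal (cQ p Q.1) * σ Q.1.set ^ (1/(p-1)) * min (lam Q.1) ((m:ℕ):ℝ≥0∞)) := by
    intro a b hab
    intro Q
    exact mul_le_mul_right (min_le_min le_rfl (by exact_mod_cast hab)) _
  have hsup_min : ∀ a : ℝ≥0∞, (⨆ m : ℕ, min a ((m:ℕ):ℝ≥0∞)) = a := by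
    intro a
    refine le_antisymm (iSup_le fun m => min_le_left _ _) ?_
    rcases eq_or_ne a ∞ with ha | ha
    · rw [ha]
      calc (⊤:ℝ≥0∞) = ⨆ m : ℕ, ((m:ℕ):ℝ≥0∞) := ENNReal.iSup_natCast.symm
        _ ≤ ⨆ m : ℕ, min (⊤:ℝ≥0∞) ((m:ℕ):ℝ≥0∞) :=
            iSup_mono fun m => le_of_eq (min_eq_right le_top).symm
    · obtain ⟨m, hm⟩ := ENNReal.exists_nat_gt ha
      exact le_iSup_of_le m (le_of_eq (min_eq_left hm.le).symm)
  calc ENNReal.ofReal ((p-1)/A^(2-p)) * ∑' Q : {Q : DyadicCube n // Q.set ⊆ P.set},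
        ENNReal.ofReal (cQ p Q.1) * σ Q.1.set ^ (1/(p-1)) * lam Q.1
      = ENNReal.ofReal ((p-1)/A^(2-p)) * ⨆ m : ℕ,
          ∑' Q : {Q : DyadicCube n // Q.set ⊆ P.set},
            ENNReal.ofReal (cQ p Q.1) * σ Q.1.set ^ (1/(p-1)) * min (lam Q.1) ((m:ℕ):ℝ≥0∞) := by
        congr 1
        rw [← tsum_iSup_mono _ hmono]
        refine tsum_congr fun Q => ?_
        conv_lhs => rw [← hsup_min (lam Q.1)]
        rw [ENNReal.mul_iSup]
    _ = ⨆ m : ℕ, ENNReal.ofReal ((p-1)/A^(2-p)) *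
          ∑' Q : {Q : DyadicCube n // Q.set ⊆ P.set},
            ENNReal.ofReal (cQ p Q.1) * σ Q.1.set ^ (1/(p-1)) * min (lam Q.1) ((m:ℕ):ℝ≥0∞) := by
        rw [ENNReal.mul_iSup]
    _ ≤ _ := iSup_le fun m => main (fun Q => min (lam Q) ((m:ℕ):ℝ≥0∞)) (hub m)
        (fun Q => min_le_left _ _)

end Stmt8

theorem stmt8 (n : ℕ) (hn : 2 ≤ n) (p : ℝ) (hp1 : 1 < p) (hp2 : p ≤ 2) (A : ℝ) (hA : 0 < A) :
    ∃ C : ℝ, 0 < C ∧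
      ∀ (σt : Measure (EuclideanSpace ℝ (Fin n))), DiscCarlE p σt A →
        ∀ (lam : DyadicCube n → ℝ≥0∞) (P : DyadicCube n),
          ENNReal.ofReal C *
              ∑' Q : {Q : DyadicCube n // Q.set ⊆ P.set},
                ENNReal.ofReal (cQ p Q.1) * σt Q.1.set ^ (1 / (p - 1)) * lam Q.1
          ≤ ∫⁻ x in P.set,
              (∑' Q : {Q : DyadicCube n // x ∈ Q.set ∧ Q.set ⊆ P.set},
                  ENNReal.ofReal (cQ p Q.1) * lam Q.1 ^ (1 / (p - 1))) ^ (p - 1) ∂σt :=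
  Stmt8.stmt8' n hn p hp1 hp2 A hA
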